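/- Let f : ℝ² → ℝ be smooth and suppose that all its circular averages vanish: ∫₀^{2π} f(r cos ψ, r sin ψ) dψ = 0 for every r ≥ 0. Then there exists a smooth function s : ℝ² → ℝ such that P·(∂s/∂Q)(P,Q) − Q·(∂s/∂P)(P,Q) = f(P,Q) for all (P,Q) ∈ ℝ². -/

import Mathlib

open Real

noncomputable section

/-- Partial derivative in the first variable of a real function on `ℝ × ℝ`. -/
def rpd1 (f : ℝ × ℝ → ℝ) (x : ℝ × ℝ) : ℝ := deriv (fun t => f (t, x.2)) x.1

/-- Partial derivative in the second variable of a real function on `ℝ × ℝ`. -/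
def rpd2 (f : ℝ × ℝ → ℝ) (x : ℝ × ℝ) : ℝ := deriv (fun t => f (x.1, t)) x.2

/-- Rotation of the plane by angle `ψ`. -/
def rot (ψ : ℝ) (x : ℝ × ℝ) : ℝ × ℝ :=
  (x.1 * Real.cos ψ - x.2 * Real.sin ψ, x.1 * Real.sin ψ + x.2 * Real.cos ψ)

lemma rot_contDiff : ContDiff ℝ (⊤ : ℕ∞) (fun p : ℝ × (ℝ × ℝ) => rot p.1 p.2) := by
  unfold rot
  have hc : ContDiff ℝ (⊤ : ℕ∞) (fun p : ℝ × (ℝ × ℝ) => Real.cos p.1) :=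
    Real.contDiff_cos.comp contDiff_fst
  have hs : ContDiff ℝ (⊤ : ℕ∞) (fun p : ℝ × (ℝ × ℝ) => Real.sin p.1) :=
    Real.contDiff_sin.comp contDiff_fst
  have h1 : ContDiff ℝ (⊤ : ℕ∞) (fun p : ℝ × (ℝ × ℝ) => p.2.1) :=
    contDiff_fst.comp contDiff_snd
  have h2 : ContDiff ℝ (⊤ : ℕ∞) (fun p : ℝ × (ℝ × ℝ) => p.2.2) :=
    contDiff_snd.comp contDiff_snd
  exact ((h1.mul hc).sub (h2.mul hs)).prodMk ((h1.mul hs).add (h2.mul hc))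

lemma rot_zero (x : ℝ × ℝ) : rot 0 x = x := by simp [rot]

lemma rot_rot (ψ τ : ℝ) (x : ℝ × ℝ) : rot ψ (rot τ x) = rot (ψ + τ) x := by
  simp only [rot, Real.cos_add, Real.sin_add, Prod.mk.injEq]
  constructor <;> ring

lemma rot_periodic (x : ℝ × ℝ) (ψ : ℝ) : rot (ψ + 2 * π) x = rot ψ x := by
  simp [rot, Real.cos_add_two_pi, Real.sin_add_two_pi]

open MeasureTheory in
/-- Smoothness of a parametric interval integral with smooth integrand. -/
lemma param_int_contDiff :
    ∀ (n : ℕ) {E : Type} [NormedAddCommGroup E] [NormedSpace ℝ E] [CompleteSpace E]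
      (g : ℝ × (ℝ × ℝ) → E), ContDiff ℝ (⊤ : ℕ∞) g →
      ContDiff ℝ n (fun x : ℝ × ℝ => ∫ ψ in (0 : ℝ)..(2 * π), g (ψ, x)) := by
  have hT : (1 : WithTop ℕ∞) ≤ ((⊤ : ℕ∞) : WithTop ℕ∞) := by exact_mod_cast le_top
  intro n
  induction n with
  | zero =>
    intro E _ _ _ g hg
    rw [Nat.cast_zero, contDiff_zero]
    exact intervalIntegral.continuous_parametric_intervalIntegral_of_continuous'
      (f := fun (x : ℝ × ℝ) (ψ : ℝ) => g (ψ, x))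
      (hg.continuous.comp continuous_swap) 0 (2 * π)
  | succ n ih =>
    intro E _ _ _ g hg
    have hgd : Differentiable ℝ g := hg.differentiable (by simp)
    set ι : (ℝ × ℝ) →L[ℝ] ℝ × (ℝ × ℝ) :=
      (0 : (ℝ × ℝ) →L[ℝ] ℝ).prod (ContinuousLinearMap.id ℝ (ℝ × ℝ)) with hι
    set G : ℝ × (ℝ × ℝ) → ((ℝ × ℝ) →L[ℝ] E) := fun p => (fderiv ℝ g p).comp ι with hG
    have hGc : ContDiff ℝ (⊤ : ℕ∞) G :=
      ((contDiff_infty_iff_fderiv.mp hg).2).clm_comp contDiff_const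
    have key : ∀ x₀ : ℝ × ℝ, HasFDerivAt (fun x => ∫ ψ in (0 : ℝ)..(2 * π), g (ψ, x))
        (∫ ψ in (0 : ℝ)..(2 * π), G (ψ, x₀)) x₀ := by
      intro x₀
      obtain ⟨C, hC⟩ := ((isCompact_Icc (a := (0 : ℝ)) (b := 2 * π)).prod
        (isCompact_closedBall x₀ 1)).exists_bound_of_continuousOn hGc.continuous.continuousOn
      have hIoc : Set.uIoc (0 : ℝ) (2 * π) ⊆ Set.Icc (0 : ℝ) (2 * π) := by
        rw [Set.uIoc_of_le (by positivity)]
        exact Set.Ioc_subset_Icc_self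
      refine intervalIntegral.hasFDerivAt_integral_of_dominated_of_fderiv_le
        (F := fun x ψ => g (ψ, x)) (F' := fun x ψ => G (ψ, x)) (bound := fun _ => C)
        (s := Metric.ball x₀ 1) (Metric.ball_mem_nhds x₀ one_pos) ?_ ?_ ?_ ?_ ?_ ?_
      · exact Filter.Eventually.of_forall fun x =>
          (hg.continuous.comp (continuous_id.prodMk continuous_const)).aestronglyMeasurable
      · exact (hg.continuous.comp (continuous_id.prodMk continuous_const)).intervalIntegrable _ _
      · haveI : SecondCountableTopologyEither ℝ ((ℝ × ℝ) →L[ℝ] E) :=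
          secondCountableTopologyEither_of_left ℝ _
        exact (hGc.continuous.comp (continuous_id.prodMk continuous_const)).aestronglyMeasurable
      · refine Filter.Eventually.of_forall fun t ht x hx => ?_
        exact hC (t, x) ⟨hIoc ht, Metric.ball_subset_closedBall hx⟩
      · exact intervalIntegrable_const
      · refine Filter.Eventually.of_forall fun t _ x _ => ?_
        have h2 : HasFDerivAt (fun y : ℝ × ℝ => ((t, y) : ℝ × (ℝ × ℝ))) ι x :=
          (hasFDerivAt_const t x).prodMk (hasFDerivAt_id x)
        exact ((hgd (t, x)).hasFDerivAt).comp x h2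
    have hdiff : Differentiable ℝ (fun x : ℝ × ℝ => ∫ ψ in (0 : ℝ)..(2 * π), g (ψ, x)) :=
      fun x => (key x).differentiableAt
    have hcast : ((n + 1 : ℕ) : WithTop ℕ∞) = (n : WithTop ℕ∞) + 1 := by push_cast; ring
    rw [hcast, contDiff_succ_iff_fderiv]
    refine ⟨hdiff, by simp, ?_⟩
    have heq : (fderiv ℝ fun x : ℝ × ℝ => ∫ ψ in (0 : ℝ)..(2 * π), g (ψ, x)) =
        fun x => ∫ ψ in (0 : ℝ)..(2 * π), G (ψ, x) := funext fun x => (key x).fderiv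
    rw [heq]
    exact ih G hGc

theorem stmt_9 (f : ℝ × ℝ → ℝ) (hf : ContDiff ℝ (⊤ : ℕ∞) f)
    (havg : ∀ r : ℝ, 0 ≤ r →
      (∫ ψ in (0 : ℝ)..(2 * π), f (r * Real.cos ψ, r * Real.sin ψ)) = 0) :
    ∃ s : ℝ × ℝ → ℝ, ContDiff ℝ (⊤ : ℕ∞) s ∧
      ∀ P Q : ℝ, P * rpd2 s (P, Q) - Q * rpd1 s (P, Q) = f (P, Q) := by
  -- the candidate solution
  set s : ℝ × ℝ → ℝ :=
    fun x => (2 * π)⁻¹ * ∫ ψ in (0 : ℝ)..(2 * π), ψ * f (rot ψ x) with hs_def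
  -- joint smoothness of the integrand
  have hint_smooth : ContDiff ℝ (⊤ : ℕ∞) (fun p : ℝ × (ℝ × ℝ) => p.1 * f (rot p.1 p.2)) :=
    contDiff_fst.mul (hf.comp rot_contDiff)
  have hs_smooth : ContDiff ℝ (⊤ : ℕ∞) s := by
    rw [contDiff_infty]
    intro n
    exact contDiff_const.mul (param_int_contDiff n _ hint_smooth)
  have hπ : (0 : ℝ) < 2 * π := by positivity
  -- periodicity of the angular slices
  have hper : ∀ x : ℝ × ℝ, Function.Periodic (fun u => f (rot u x)) (2 * π) := by
    intro x u
    simp [rot_periodic]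
  -- zero average over every circle, in shifted form
  have Z : ∀ (x : ℝ × ℝ) (τ : ℝ), (∫ u in τ..(τ + 2 * π), f (rot u x)) = 0 := by
    intro x τ
    rw [(hper x).intervalIntegral_add_eq τ 0, zero_add]
    -- polar coordinates for x
    set z : ℂ := ⟨x.1, x.2⟩ with hz
    set r : ℝ := ‖z‖ with hr
    set θ : ℝ := Complex.arg z with hθ
    have hx1 : x.1 = r * Real.cos θ := (Complex.norm_mul_cos_arg z).symm
    have hx2 : x.2 = r * Real.sin θ := (Complex.norm_mul_sin_arg z).symm
    have hrot : ∀ u : ℝ, rot u x = (r * Real.cos (u + θ), r * Real.sin (u + θ)) := by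
      intro u
      simp only [rot, hx1, hx2, Real.cos_add, Real.sin_add, Prod.mk.injEq]
      constructor <;> ring
    have hper2 : Function.Periodic (fun v => f (r * Real.cos v, r * Real.sin v)) (2 * π) := by
      intro v
      simp [Real.cos_add_two_pi, Real.sin_add_two_pi]
    rw [show (∫ u in (0 : ℝ)..(2 * π), f (rot u x))
        = ∫ u in (0 : ℝ)..(2 * π), f (r * Real.cos (u + θ), r * Real.sin (u + θ)) from
      intervalIntegral.integral_congr fun u _ => by rw [hrot]]
    have e := intervalIntegral.integral_comp_add_right (a := (0 : ℝ)) (b := 2 * π)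
      (fun v => f (r * Real.cos v, r * Real.sin v)) θ
    rw [e, show (0 : ℝ) + θ = θ by ring, show 2 * π + θ = θ + 2 * π by ring,
      hper2.intervalIntegral_add_eq θ 0, zero_add]
    exact havg r (norm_nonneg z)
  refine ⟨s, hs_smooth, ?_⟩
  intro P Q
  set x : ℝ × ℝ := (P, Q) with hx
  have hfc : Continuous fun u => f (rot u x) :=
    hf.continuous.comp ((rot_contDiff.continuous).comp (continuous_id.prodMk continuous_const))
  have hhc : Continuous fun u => u * f (rot u x) := continuous_id.mul hfc
  -- Step 1: the function τ ↦ s (rot τ x) rewritten via change of variables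
  have claim1 : ∀ τ : ℝ,
      s (rot τ x) = (2 * π)⁻¹ * ∫ u in τ..(τ + 2 * π), u * f (rot u x) := by
    intro τ
    have e1 : (∫ ψ in (0 : ℝ)..(2 * π), ψ * f (rot ψ (rot τ x)))
        = ∫ ψ in (0 : ℝ)..(2 * π), (fun u => (u - τ) * f (rot u x)) (ψ + τ) := by
      apply intervalIntegral.integral_congr
      intro ψ _
      simp only [rot_rot]
      ring_nf
    have e2 : (∫ ψ in (0 : ℝ)..(2 * π), (fun u => (u - τ) * f (rot u x)) (ψ + τ))
        = ∫ u in (0 + τ)..(2 * π + τ), (u - τ) * f (rot u x) := by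
      have e := intervalIntegral.integral_comp_add_right (a := (0 : ℝ)) (b := 2 * π)
        (fun u => (u - τ) * f (rot u x)) τ
      simpa using e
    have e3 : (∫ u in (0 + τ)..(2 * π + τ), (u - τ) * f (rot u x))
        = (∫ u in τ..(τ + 2 * π), u * f (rot u x))
          - τ * ∫ u in τ..(τ + 2 * π), f (rot u x) := by
      rw [zero_add, add_comm (2 * π) τ, ← intervalIntegral.integral_const_mul,
        ← intervalIntegral.integral_sub (hhc.intervalIntegrable _ _)
          ((show Continuous fun u => τ * f (rot u x) from continuous_const.mul hfc).intervalIntegrable _ _)]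
      apply intervalIntegral.integral_congr
      intro u _
      ring
    rw [hs_def]
    simp only
    rw [e1, e2, e3, Z x τ, mul_zero, sub_zero]
  -- Step 2: derivative of τ ↦ s (rot τ x) at 0 is f x
  have claim2 : HasDerivAt (fun τ => s (rot τ x)) (f x) 0 := by
    have hA : ∀ b : ℝ, HasDerivAt (fun u => ∫ v in (0 : ℝ)..u, v * f (rot v x))
        (b * f (rot b x)) b := fun b => (hhc.integral_hasStrictDerivAt 0 b).hasDerivAt
    have h1 : HasDerivAt (fun τ : ℝ => ∫ v in (0 : ℝ)..(τ + 2 * π), v * f (rot v x))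
        ((0 + 2 * π) * f (rot (0 + 2 * π) x) * 1) 0 :=
      by have := (hA (0 + 2 * π)).comp 0 ((hasDerivAt_id 0).add_const (2 * π)); exact this
    have h2 : HasDerivAt (fun τ : ℝ => ∫ v in (0 : ℝ)..τ, v * f (rot v x))
        (0 * f (rot 0 x)) 0 := hA 0
    have h3 : HasDerivAt
        (fun τ : ℝ => (2 * π)⁻¹ * ((∫ v in (0 : ℝ)..(τ + 2 * π), v * f (rot v x))
          - ∫ v in (0 : ℝ)..τ, v * f (rot v x)))
        ((2 * π)⁻¹ * ((0 + 2 * π) * f (rot (0 + 2 * π) x) * 1 - 0 * f (rot 0 x))) 0 :=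
      (h1.sub h2).const_mul _
    have hval : (2 * π)⁻¹ * ((0 + 2 * π) * f (rot (0 + 2 * π) x) * 1 - 0 * f (rot 0 x))
        = f x := by
      have : rot (0 + 2 * π) x = x := by rw [rot_periodic, rot_zero]
      rw [this]
      field_simp
      ring
    rw [hval] at h3
    refine h3.congr_of_eventuallyEq (Filter.Eventually.of_forall fun τ => ?_)
    show s (rot τ x) = (2 * π)⁻¹ * ((∫ v in (0 : ℝ)..(τ + 2 * π), v * f (rot v x))
      - ∫ v in (0 : ℝ)..τ, v * f (rot v x))
    rw [claim1 τ, intervalIntegral.integral_interval_sub_left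
      (hhc.intervalIntegrable _ _) (hhc.intervalIntegrable _ _)]
  -- Step 3: chain rule expression of the same derivative
  have hsd : DifferentiableAt ℝ s x :=
    (hs_smooth.differentiable (by simp)) x
  set L : (ℝ × ℝ) →L[ℝ] ℝ := fderiv ℝ s x with hL
  have hrotd : HasDerivAt (fun τ => rot τ x) (-Q, P) 0 := by
    have c1 : HasDerivAt (fun τ => P * Real.cos τ - Q * Real.sin τ) (-Q) 0 := by
      have := ((Real.hasDerivAt_cos 0).const_mul P).sub ((Real.hasDerivAt_sin 0).const_mul Q)
      exact this.congr_deriv (by simp)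
    have c2 : HasDerivAt (fun τ => P * Real.sin τ + Q * Real.cos τ) P 0 := by
      have := ((Real.hasDerivAt_sin 0).const_mul P).add ((Real.hasDerivAt_cos 0).const_mul Q)
      exact this.congr_deriv (by simp)
    exact c1.prodMk c2
  have claim3 : HasDerivAt (fun τ => s (rot τ x)) (L (-Q, P)) 0 := by
    have hF : HasFDerivAt s L ((fun τ => rot τ x) 0) := by
      simp only [rot_zero]
      exact hsd.hasFDerivAt
    exact hF.comp_hasDerivAt 0 hrotd
  have hrpd1 : rpd1 s x = L (1, 0) := by
    have hg : HasDerivAt (fun t : ℝ => ((t, Q) : ℝ × ℝ)) ((1 : ℝ), (0 : ℝ)) P :=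
      (hasDerivAt_id P).prodMk (hasDerivAt_const P Q)
    have := hsd.hasFDerivAt.comp_hasDerivAt P hg
    exact this.deriv
  have hrpd2 : rpd2 s x = L (0, 1) := by
    have hg : HasDerivAt (fun t : ℝ => ((P, t) : ℝ × ℝ)) ((0 : ℝ), (1 : ℝ)) Q :=
      (hasDerivAt_const Q P).prodMk (hasDerivAt_id Q)
    have := hsd.hasFDerivAt.comp_hasDerivAt Q hg
    exact this.deriv
  have hlin : L (-Q, P) = P * L (0, 1) - Q * L (1, 0) := by
    have : ((-Q, P) : ℝ × ℝ) = P • ((0 : ℝ), (1 : ℝ)) + (-Q) • ((1 : ℝ), (0 : ℝ)) := by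
      simp [Prod.ext_iff]
    rw [this, map_add, map_smul, map_smul]
    simp [smul_eq_mul]
    ring
  have := claim2.unique claim3
  rw [hrpd1, hrpd2, ← hlin]
  exact this.symm
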